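/- Let d > 0 and N ≥ d be integers and let c, m be positive integers. Then ⌊n/d⌋ = ⌊c·n/m⌋ for all integers n with 0 ≤ n ≤ N if and only if 1/d ≤ c/m < (1 + 1/(N - ((N+1) mod d)))·(1/d). -/

import Mathlib

theorem stmt_2 (d N c m : ℕ) (hd : 0 < d) (hN : d ≤ N) (hc : 0 < c) (hm : 0 < m) :
    (∀ n : ℕ, n ≤ N → n / d = (c * n) / m) ↔
      ((1 : ℚ) / d ≤ (c : ℚ) / m ∧
        (c : ℚ) / m < (1 + 1 / ((N - (N + 1) % d : ℕ) : ℚ)) * (1 / d)) := by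
  set r := (N + 1) % d with hr
  set K := N - r with hK
  set q := (N + 1) / d with hq
  have hrd : r < d := Nat.mod_lt _ hd
  have hqr : q * d + r = N + 1 := by rw [hq, hr, mul_comm]; exact Nat.div_add_mod _ _
  have hqd2 : 2 ≤ q * d := by omega
  have hKq : K + 1 = q * d := by omega
  have hK1 : 1 ≤ K := by omega
  have hKN : K ≤ N := by omega
  have hq1 : 1 ≤ q := by
    rcases Nat.eq_zero_or_pos q with h | h
    · rw [h] at hqd2; omega
    · exact h
  have hd0 : (0:ℚ) < (d:ℚ) := by exact_mod_cast hd
  have hm0 : (0:ℚ) < (m:ℚ) := by exact_mod_cast hm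
  have hK0 : (0:ℚ) < (K:ℚ) := by exact_mod_cast hK1
  have h1 : ((1:ℚ)/d ≤ (c:ℚ)/m) ↔ m ≤ c * d := by
    rw [div_le_div_iff₀ hd0 hm0, one_mul]
    exact_mod_cast Iff.rfl
  have e : (1 + 1/(K:ℚ)) * (1/(d:ℚ)) = (q:ℚ)/(K:ℚ) := by
    have hcast : ((K:ℚ)+1) = (q:ℚ)*(d:ℚ) := by exact_mod_cast hKq
    field_simp
    linear_combination hcast
  have h2 : ((c:ℚ)/m < (1 + 1/(K:ℚ)) * (1/(d:ℚ))) ↔ c * K < q * m := by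
    rw [e, div_lt_div_iff₀ hm0 hK0]
    exact_mod_cast Iff.rfl
  rw [h1, h2]
  constructor
  · intro h
    constructor
    · have hdN := h d hN
      rw [Nat.div_self hd] at hdN
      exact (Nat.one_le_div_iff hm).mp (le_of_eq hdN)
    · have hsub : (q - 1) * d = q * d - 1 * d := by rw [Nat.sub_mul]
      have hsucc : (q - 1 + 1) * d = q * d := by rw [Nat.sub_add_cancel hq1]
      have hKd : K / d = q - 1 := Nat.div_eq_of_lt_le (by omega) (by omega)
      have hKh := h K hKN
      rw [hKd] at hKh
      have hlt : c * K / m < q := by omega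
      exact (Nat.div_lt_iff_lt_mul hm).mp hlt
  · rintro ⟨hmcd, hcK⟩ n hn
    have hnd := Nat.div_add_mod n d
    set a := n / d with ha
    have hbd : n % d < d := Nat.mod_lt _ hd
    rcases le_or_gt n K with hnK | hKn
    · -- n in a full block: a + 1 ≤ q
      have haq : a + 1 ≤ q := by
        have e1 : d * q = q * d := by ring
        exact Nat.lt_of_mul_lt_mul_left (show d * a < d * q by omega)
      have hn1 : n + 1 ≤ (a + 1) * d := by
        have : (a + 1) * d = d * a + d := by ring
        omega
      have hlow : a * m ≤ c * n :=
        calc a * m ≤ a * (c * d) := Nat.mul_le_mul_left a hmcd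
          _ = c * (d * a) := by ring
          _ ≤ c * n := Nat.mul_le_mul_left c (by omega)
      have hhigh : c * n < (a + 1) * m := by
        have key : q * (c * n) + q * c < q * ((a + 1) * m) + q * c :=
          calc q * (c * n) + q * c = q * c * (n + 1) := by ring
            _ ≤ q * c * ((a + 1) * d) := Nat.mul_le_mul_left _ hn1
            _ = (a + 1) * c * (q * d) := by ring
            _ = (a + 1) * c * (K + 1) := by rw [hKq]
            _ = (a + 1) * (c * K) + (a + 1) * c := by ring
            _ < (a + 1) * (q * m) + (a + 1) * c :=
                Nat.add_lt_add_right (mul_lt_mul_of_pos_left hcK (Nat.succ_pos a)) _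
            _ = q * ((a + 1) * m) + (a + 1) * c := by ring
            _ ≤ q * ((a + 1) * m) + q * c := by
                have := Nat.mul_le_mul_right c haq
                omega
        have key2 : q * (c * n) < q * ((a + 1) * m) := by omega
        exact Nat.lt_of_mul_lt_mul_left key2
      have := Nat.div_eq_of_lt_le hlow hhigh
      omega
    · -- last partial block: a = q
      have haq : a = q := by
        have e1 : d * (q + 1) = q * d + d := by ring
        have e2 : d * (a + 1) = d * a + d := by ring
        have e3 : d * q = q * d := by ring
        have h1 : a < q + 1 := Nat.lt_of_mul_lt_mul_left (show d * a < d * (q + 1) by omega)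
        have h2 : q < a + 1 := Nat.lt_of_mul_lt_mul_left (show d * q < d * (a + 1) by omega)
        omega
      have hqrm : q * (c * r) < q * m := by
        have h1 : q * r ≤ q * (d - 1) := Nat.mul_le_mul_left q (by omega)
        have h2 : q * (d - 1) + q * 1 = q * d := by rw [← Nat.mul_add]; congr 1; omega
        have h3 : c * (q * r) ≤ c * K := Nat.mul_le_mul_left c (by omega)
        have h4 : q * (c * r) = c * (q * r) := by ring
        omega
      have hlow : a * m ≤ c * n := by
        rw [haq]
        calc q * m ≤ q * (c * d) := Nat.mul_le_mul_left q hmcd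
          _ = c * (q * d) := by ring
          _ ≤ c * n := Nat.mul_le_mul_left c (by omega)
      have hhigh : c * n < (a + 1) * m := by
        rw [haq]
        have key : q * (c * n) < q * ((q + 1) * m) := by
          have h1 : c * n ≤ c * (K + r) := Nat.mul_le_mul_left c (by omega)
          have h5 := Nat.mul_le_mul_left q h1
          have h2 : q * (c * (K + r)) = q * (c * K) + q * (c * r) := by ring
          have h3 : q * (c * K) < q * (q * m) := mul_lt_mul_of_pos_left hcK (by omega)
          have h6 : q * (q * m) + q * m = q * ((q + 1) * m) := by ring
          omega
        exact Nat.lt_of_mul_lt_mul_left key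
      have := Nat.div_eq_of_lt_le hlow hhigh
      omega
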